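/- For all t ≥ 0, |J_1(t)| ≤ 2/π. -/

import Mathlib

open Real

/-- The Bessel function of the first kind of order `ν`. -/
noncomputable def besselJ (ν x : ℝ) : ℝ :=
  ∑' j : ℕ, (-1 : ℝ) ^ j / ((Nat.factorial j : ℝ) * Real.Gamma (ν + 1 + j)) *
    (x / 2) ^ (2 * (j : ℝ) + ν)

open Finset

lemma wallisProd (n : ℕ) : ∏ i ∈ range n, ((2*(i:ℝ)+1)/(2*i+2)) =
    (Nat.factorial (2*n) : ℝ) / ((Nat.factorial n)^2 * 4^n) := by
  induction n with
  | zero => simp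
  | succ k ih =>
    rw [prod_range_succ, ih]
    have h1 : (2*(k+1)) = (2*k+1)+1 := by ring
    rw [h1, Nat.factorial_succ, Nat.factorial_succ, Nat.factorial_succ]
    have h2 : ((Nat.factorial k :ℝ)) ≠ 0 := Nat.cast_ne_zero.mpr k.factorial_ne_zero
    push_cast
    field_simp
    ring

lemma sinpow_int (j : ℕ) : ∫ x in (0:ℝ)..(π/2), sin x ^ (2*(j+1)) =
    (π/2) * ∏ i ∈ range (j+1), ((2*(i:ℝ)+1)/(2*i+2)) := by
  have symm : ∫ x in (π/2)..π, sin x ^ (2*(j+1)) = ∫ x in (0:ℝ)..(π/2), sin x ^ (2*(j+1)) := by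
    have := intervalIntegral.integral_comp_sub_left (a := 0) (b := π/2)
      (fun y => sin y ^ (2*(j+1))) π
    simp only [Real.sin_pi_sub] at this
    rw [show π - π/2 = π/2 by ring, show π - (0:ℝ) = π by ring] at this
    exact this.symm
  have i1 : IntervalIntegrable (fun x => sin x ^ (2*(j+1))) MeasureTheory.volume 0 (π/2) :=
    Continuous.intervalIntegrable (by continuity) _ _
  have i2 : IntervalIntegrable (fun x => sin x ^ (2*(j+1))) MeasureTheory.volume (π/2) π :=
    Continuous.intervalIntegrable (by continuity) _ _
  have split := intervalIntegral.integral_add_adjacent_intervals i1 i2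
  rw [integral_sin_pow_even] at split
  linarith [split, symm]

lemma besselJ_one_eq (t : ℝ) : besselJ 1 t =
    ∑' j : ℕ, (-1:ℝ)^j * t^(2*j+1) /
      ((Nat.factorial j : ℝ) * (Nat.factorial (j+1)) * 2^(2*j+1)) := by
  unfold besselJ
  congr 1; funext j
  have hg : (1:ℝ) + 1 + j = ((j+1:ℕ):ℝ) + 1 := by push_cast; ring
  have he : (2*(j:ℝ)+1) = ((2*j+1 : ℕ):ℝ) := by push_cast; ring
  rw [hg, Real.Gamma_nat_eq_factorial, he, Real.rpow_natCast, div_pow]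
  have h2 : ((2:ℝ))^(2*j+1) ≠ 0 := by positivity
  have hf1 : ((Nat.factorial j :ℝ)) ≠ 0 := Nat.cast_ne_zero.mpr j.factorial_ne_zero
  have hf2 : ((Nat.factorial (j+1) :ℝ)) ≠ 0 := Nat.cast_ne_zero.mpr (j+1).factorial_ne_zero
  field_simp

lemma coeff_eq (t : ℝ) (j : ℕ) :
    (-1:ℝ)^j * t^(2*j+1) / ((Nat.factorial j : ℝ) * (Nat.factorial (j+1)) * 2^(2*j+1))
      = (2/π) * ((-1:ℝ)^j * t^(2*j+1) / (Nat.factorial (2*j+1)) *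
        ((π/2) * ∏ i ∈ range (j+1), ((2*(i:ℝ)+1)/(2*i+2)))) := by
  rw [wallisProd]
  have hπ : (π:ℝ) ≠ 0 := Real.pi_ne_zero
  have h1 : (2*(j+1)) = (2*j+1)+1 := by ring
  rw [h1]
  have hf1 : ((Nat.factorial j :ℝ)) ≠ 0 := Nat.cast_ne_zero.mpr j.factorial_ne_zero
  have hf2 : ((Nat.factorial (j+1) :ℝ)) ≠ 0 := Nat.cast_ne_zero.mpr (j+1).factorial_ne_zero
  have hf3 : ((Nat.factorial (2*j+1) :ℝ)) ≠ 0 := Nat.cast_ne_zero.mpr (2*j+1).factorial_ne_zero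
  have h4 : ((4:ℝ))^(j+1) = 2 * 2^(2*j+1) := by
    rw [show ((4:ℝ)) = 2^2 by norm_num, ← pow_mul,
      show 2*(j+1) = (2*j+1)+1 by ring, pow_succ]
    ring
  rw [h4]
  push_cast [Nat.factorial_succ]
  field_simp
  ring


open MeasureTheory in
lemma besselJ_one_rep (t : ℝ) (ht : 0 ≤ t) :
    besselJ 1 t = (2/π) * ∫ x in Set.Ioc (0:ℝ) (π/2), Real.sin (t * Real.sin x) * Real.sin x := by
  have hπ2 : (0:ℝ) ≤ π/2 := by linarith [Real.pi_pos]
  set μ := volume.restrict (Set.Ioc (0:ℝ) (π/2)) with hμ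
  set c : ℕ → ℝ := fun j => (-1:ℝ)^j * t^(2*j+1) / (Nat.factorial (2*j+1)) with hc
  set F : ℕ → ℝ → ℝ := fun j x => c j * Real.sin x ^ (2*j+2) with hF
  have hFcont : ∀ j, Continuous (F j) :=
    fun j => continuous_const.mul ((Real.continuous_sin).pow _)
  have hFint : ∀ j, Integrable (F j) μ := fun j => (hFcont j).integrableOn_Ioc
  -- pointwise sum
  have hsum : ∀ x : ℝ, (∑' j, F j x) = Real.sin (t * Real.sin x) * Real.sin x := by
    intro x
    rw [Real.sin_eq_tsum (t * Real.sin x), ← tsum_mul_right]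
    congr 1; funext j
    simp only [hF, hc, mul_pow]
    rw [show 2*j+2 = (2*j+1)+1 by ring, pow_succ]
    ring
  -- norm bound and summability
  have hcabs : ∀ j, |c j| = t^(2*j+1) / (Nat.factorial (2*j+1)) := by
    intro j
    rw [hc, abs_div, abs_mul, abs_pow, abs_neg, abs_one, one_pow, one_mul,
      abs_pow, abs_of_nonneg ht, Nat.abs_cast]
  have hnormint : ∀ j, (∫ x, ‖F j x‖ ∂μ) ≤ (π/2) * |c j| := by
    intro j
    have hb : ∀ x ∈ Set.Ioc (0:ℝ) (π/2), ‖F j x‖ ≤ |c j| := by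
      intro x _
      simp only [hF, Real.norm_eq_abs, abs_mul]
      have h1 : |Real.sin x ^ (2*j+2)| ≤ 1 := by
        rw [abs_pow]
        exact pow_le_one₀ (abs_nonneg _) (Real.abs_sin_le_one x)
      calc |c j| * |Real.sin x ^ (2*j+2)| ≤ |c j| * 1 :=
            mul_le_mul_of_nonneg_left h1 (abs_nonneg _)
        _ = |c j| := mul_one _
    have := setIntegral_mono_on ((hFint j).norm) (integrableOn_const
      (by rw [Real.volume_Ioc]; exact ENNReal.ofReal_ne_top)) measurableSet_Ioc hb
    calc (∫ x, ‖F j x‖ ∂μ) ≤ ∫ _ in Set.Ioc (0:ℝ) (π/2), |c j| := this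
      _ = (π/2) * |c j| := by
          rw [setIntegral_const, measureReal_def, Real.volume_Ioc, smul_eq_mul,
            ENNReal.toReal_ofReal (by linarith)]
          norm_num
  have hsummable : Summable (fun j => ∫ x, ‖F j x‖ ∂μ) := by
    apply Summable.of_nonneg_of_le (fun j => integral_nonneg (fun x => norm_nonneg _)) hnormint
    apply Summable.mul_left
    have h0 : Summable (fun n : ℕ => |t^n / (Nat.factorial n : ℝ)|) :=
      (Real.summable_pow_div_factorial t).abs
    have h1 : Summable ((fun n : ℕ => |t^n / (Nat.factorial n : ℝ)|) ∘ (fun j => 2*j+1)) :=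
      h0.comp_injective (fun a b h => by omega)
    refine h1.congr (fun j => ?_)
    simp only [Function.comp_apply]
    rw [hcabs j]
    exact abs_of_nonneg (by positivity)
  -- interchange
  have hinter := integral_tsum_of_summable_integral_norm hFint hsummable
  -- each integral
  have heach : ∀ j, (∫ x, F j x ∂μ) = c j * ((π/2) * ∏ i ∈ range (j+1), ((2*(i:ℝ)+1)/(2*i+2))) := by
    intro j
    have : (∫ x, F j x ∂μ) = ∫ x in (0:ℝ)..(π/2), F j x := by
      rw [intervalIntegral.integral_of_le hπ2]
    rw [this, hF]
    simp only
    rw [intervalIntegral.integral_const_mul, show 2*j+2 = 2*(j+1) by ring, sinpow_int j]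
  rw [besselJ_one_eq]
  have : ∀ j : ℕ, (-1:ℝ)^j * t^(2*j+1) /
      ((Nat.factorial j : ℝ) * (Nat.factorial (j+1)) * 2^(2*j+1))
      = (2/π) * (∫ x, F j x ∂μ) := by
    intro j
    rw [heach j, hc]
    exact coeff_eq t j
  calc (∑' j : ℕ, (-1:ℝ)^j * t^(2*j+1) /
        ((Nat.factorial j : ℝ) * (Nat.factorial (j+1)) * 2^(2*j+1)))
      = ∑' j, (2/π) * (∫ x, F j x ∂μ) := by exact tsum_congr this
    _ = (2/π) * ∑' j, (∫ x, F j x ∂μ) := tsum_mul_left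
    _ = (2/π) * ∫ x, (∑' j, F j x) ∂μ := by rw [hinter]
    _ = (2/π) * ∫ x in Set.Ioc (0:ℝ) (π/2), Real.sin (t * Real.sin x) * Real.sin x := by
        congr 1
        exact integral_congr_ae (Filter.Eventually.of_forall (fun x => hsum x))


open MeasureTheory

/-- For all `t ≥ 0`, `|J_1(t)` ≤ 2/π`. -/
theorem abs_besselJ_one_le (t : ℝ) (ht : 0 ≤ t) : |besselJ 1 t| ≤ 2 / π := by
  rw [besselJ_one_rep t ht]
  have hπ : (0:ℝ) < π := Real.pi_pos
  have hπ2 : (0:ℝ) ≤ π/2 := by linarith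
  have hfc : Continuous (fun x => Real.sin (t * Real.sin x) * Real.sin x) :=
    (Real.continuous_sin.comp (continuous_const.mul Real.continuous_sin)).mul Real.continuous_sin
  have key : |∫ x in Set.Ioc (0:ℝ) (π/2), Real.sin (t * Real.sin x) * Real.sin x| ≤ 1 := by
    have h1 : |∫ x in Set.Ioc (0:ℝ) (π/2), Real.sin (t * Real.sin x) * Real.sin x|
        ≤ ∫ x in Set.Ioc (0:ℝ) (π/2), ‖Real.sin (t * Real.sin x) * Real.sin x‖ := by
      rw [← Real.norm_eq_abs]
      exact norm_integral_le_integral_norm _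
    have h2 : (∫ x in Set.Ioc (0:ℝ) (π/2), ‖Real.sin (t * Real.sin x) * Real.sin x‖)
        ≤ ∫ x in Set.Ioc (0:ℝ) (π/2), Real.sin x := by
      apply setIntegral_mono_on (hfc.norm.integrableOn_Ioc)
        (Real.continuous_sin.integrableOn_Ioc) measurableSet_Ioc
      intro x hx
      have hs : 0 ≤ Real.sin x :=
        Real.sin_nonneg_of_nonneg_of_le_pi (le_of_lt hx.1) (by linarith [hx.2])
      rw [Real.norm_eq_abs, abs_mul, abs_of_nonneg hs]
      calc |Real.sin (t * Real.sin x)| * Real.sin x ≤ 1 * Real.sin x :=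
            mul_le_mul_of_nonneg_right (Real.abs_sin_le_one _) hs
        _ = Real.sin x := one_mul _
    have h3 : (∫ x in Set.Ioc (0:ℝ) (π/2), Real.sin x) = 1 := by
      rw [← intervalIntegral.integral_of_le hπ2, integral_sin]
      simp
    linarith
  rw [abs_mul]
  have : |(2/π)| = 2/π := abs_of_pos (by positivity)
  rw [this]
  calc 2/π * |∫ x in Set.Ioc (0:ℝ) (π/2), Real.sin (t * Real.sin x) * Real.sin x|
      ≤ 2/π * 1 := mul_le_mul_of_nonneg_left key (by positivity)
    _ = 2/π := mul_one _
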